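/- Suppose W : [0,1]² → ℝ is P-measurable for a finite measurable partition P of [0,1] (i.e., constant on each product S×T with S,T ∈ P). Then the cut norm of W equals the maximum over subfamilies S, T ⊆ P of |∫_{(∪S)×(∪T)} W(s,t)dsdt|. -/

import Mathlib

open MeasureTheory

/-- The cut norm of a kernel on `[0,1]²`. -/
noncomputable def cutNorm (W : ℝ → ℝ → ℝ) : ℝ :=
  sSup {r : ℝ | ∃ S T : Set ℝ, S ⊆ Set.Icc 0 1 ∧ T ⊆ Set.Icc 0 1 ∧
    MeasurableSet S ∧ MeasurableSet T ∧
    r = |∫ x in S, ∫ y in T, W x y|}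

/-- `P` is a finite measurable partition of `[0,1]` into sets of positive measure. -/
def IsPartition (P : Finset (Set ℝ)) : Prop :=
  (∀ S ∈ P, MeasurableSet S ∧ 0 < volume S) ∧
  (⋃₀ (P : Set (Set ℝ))) = Set.Icc 0 1 ∧
  ∀ S ∈ P, ∀ T ∈ P, S ≠ T → Disjoint S T



lemma lin_opt {ι : Type*} [DecidableEq ι] (s : Finset ι) (φ c a : ι → ℝ)
    (h0 : ∀ i ∈ s, 0 ≤ a i) (h1 : ∀ i ∈ s, a i ≤ c i) :
    ∃ t ⊆ s, |∑ i ∈ s, φ i * a i| ≤ |∑ i ∈ t, φ i * c i| := by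
  classical
  rcases le_total 0 (∑ i ∈ s, φ i * a i) with h | h
  · refine ⟨s.filter (fun i => 0 ≤ φ i), Finset.filter_subset _ _, ?_⟩
    rw [abs_of_nonneg h]
    refine le_trans ?_ (le_abs_self _)
    rw [Finset.sum_filter]
    refine Finset.sum_le_sum fun i hi => ?_
    by_cases hp : 0 ≤ φ i
    · simp only [hp, if_true]
      exact mul_le_mul_of_nonneg_left (h1 i hi) hp
    · simp only [hp, if_false]
      exact mul_nonpos_of_nonpos_of_nonneg (le_of_not_ge hp) (h0 i hi)
  · refine ⟨s.filter (fun i => φ i < 0), Finset.filter_subset _ _, ?_⟩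
    rw [abs_of_nonpos h]
    refine le_trans (neg_le_neg ?_) (neg_le_abs _)
    rw [Finset.sum_filter]
    refine Finset.sum_le_sum fun i hi => ?_
    by_cases hp : φ i < 0
    · simp only [hp, if_true]
      exact mul_le_mul_of_nonpos_left (h1 i hi) hp.le
    · simp only [hp, if_false]
      exact mul_nonneg (le_of_not_gt hp) (h0 i hi)

lemma inner_decomp (P : Finset (Set ℝ)) (hP : IsPartition P) (W : ℝ → ℝ → ℝ)
    (hWstep : ∀ S ∈ P, ∀ T ∈ P, ∀ x ∈ S, ∀ x' ∈ S, ∀ y ∈ T, ∀ y' ∈ T, W x y = W x' y')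
    (pt : Set ℝ → ℝ) (hpt : ∀ A ∈ P, pt A ∈ A)
    (T : Set ℝ) (hT : T ⊆ Set.Icc 0 1) (hTm : MeasurableSet T)
    {A : Set ℝ} (hA : A ∈ P) {x : ℝ} (hx : x ∈ A) :
    ∫ y in T, W x y = ∑ B ∈ P, W (pt A) (pt B) * (volume (T ∩ B)).toReal := by
  classical
  obtain ⟨hPm, hPu, hPd⟩ := hP
  have hTcover : T = ⋃ B ∈ P, T ∩ B := by
    ext y
    simp only [Set.mem_iUnion, Set.mem_inter_iff, exists_prop]
    constructor
    · intro hy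
      have : y ∈ ⋃₀ (P : Set (Set ℝ)) := hPu ▸ hT hy
      obtain ⟨B, hB, hyB⟩ := this
      exact ⟨B, hB, hy, hyB⟩
    · rintro ⟨B, _, hy, _⟩; exact hy
  have hfin : ∀ B ∈ P, volume (T ∩ B) < ⊤ := fun B hB =>
    lt_of_le_of_lt (measure_mono (Set.inter_subset_left.trans hT))
      measure_Icc_lt_top
  have hint : ∀ B ∈ P, IntegrableOn (fun y => W x y) (T ∩ B) := by
    intro B hB
    refine ((integrableOn_const_iff (C := W (pt A) (pt B))).mpr (Or.inr (hfin B hB))).congr_fun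
      (fun y hy => ?_) (hTm.inter (hPm B hB).1)
    exact hWstep A hA B hB (pt A) (hpt A hA) x hx (pt B) (hpt B hB) y hy.2
  conv_lhs => rw [hTcover]
  rw [integral_biUnion_finset P (fun B hB => hTm.inter (hPm B hB).1)
    (fun B hB B' hB' hne => (hPd B hB B' hB' hne).mono Set.inter_subset_right
      Set.inter_subset_right) hint]
  refine Finset.sum_congr rfl fun B hB => ?_
  rw [setIntegral_congr_fun (hTm.inter (hPm B hB).1)
    (g := fun _ => W (pt A) (pt B))
    (fun y hy => hWstep A hA B hB x hx (pt A) (hpt A hA) y hy.2 (pt B) (hpt B hB))]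
  rw [setIntegral_const, Measure.real, smul_eq_mul, mul_comm]

lemma full_decomp (P : Finset (Set ℝ)) (hP : IsPartition P) (W : ℝ → ℝ → ℝ)
    (hWstep : ∀ S ∈ P, ∀ T ∈ P, ∀ x ∈ S, ∀ x' ∈ S, ∀ y ∈ T, ∀ y' ∈ T, W x y = W x' y')
    (pt : Set ℝ → ℝ) (hpt : ∀ A ∈ P, pt A ∈ A)
    (S T : Set ℝ) (hS : S ⊆ Set.Icc 0 1) (hSm : MeasurableSet S)
    (hT : T ⊆ Set.Icc 0 1) (hTm : MeasurableSet T) :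
    ∫ x in S, ∫ y in T, W x y =
      ∑ A ∈ P, ∑ B ∈ P,
        W (pt A) (pt B) * (volume (S ∩ A)).toReal * (volume (T ∩ B)).toReal := by
  classical
  obtain ⟨hPm, hPu, hPd⟩ := hP
  have hScover : S = ⋃ A ∈ P, S ∩ A := by
    ext x
    simp only [Set.mem_iUnion, Set.mem_inter_iff, exists_prop]
    constructor
    · intro hx
      have : x ∈ ⋃₀ (P : Set (Set ℝ)) := hPu ▸ hS hx
      obtain ⟨A, hA, hxA⟩ := this
      exact ⟨A, hA, hx, hxA⟩
    · rintro ⟨A, _, hx, _⟩; exact hx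
  have hfin : ∀ A ∈ P, volume (S ∩ A) < ⊤ := fun A hA =>
    lt_of_le_of_lt (measure_mono (Set.inter_subset_left.trans hS)) measure_Icc_lt_top
  have hconst : ∀ A ∈ P, ∀ x ∈ S ∩ A,
      ∫ y in T, W x y = ∑ B ∈ P, W (pt A) (pt B) * (volume (T ∩ B)).toReal :=
    fun A hA x hx => inner_decomp P ⟨hPm, hPu, hPd⟩ W hWstep pt hpt T hT hTm hA hx.2
  have hint : ∀ A ∈ P, IntegrableOn (fun x => ∫ y in T, W x y) (S ∩ A) := by
    intro A hA
    refine ((integrableOn_const_iff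
      (C := ∑ B ∈ P, W (pt A) (pt B) * (volume (T ∩ B)).toReal)).mpr
      (Or.inr (hfin A hA))).congr_fun (fun x hx => (hconst A hA x hx).symm)
      (hSm.inter (hPm A hA).1)
  conv_lhs => rw [hScover]
  rw [integral_biUnion_finset P (fun A hA => hSm.inter (hPm A hA).1)
    (fun A hA A' hA' hne => (hPd A hA A' hA' hne).mono Set.inter_subset_right
      Set.inter_subset_right) hint]
  refine Finset.sum_congr rfl fun A hA => ?_
  rw [setIntegral_congr_fun (hSm.inter (hPm A hA).1)
    (g := fun _ => ∑ B ∈ P, W (pt A) (pt B) * (volume (T ∩ B)).toReal)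
    (hconst A hA), setIntegral_const, Measure.real, smul_eq_mul, Finset.mul_sum]
  refine Finset.sum_congr rfl fun B hB => by ring

lemma union_eval (P : Finset (Set ℝ)) (hP : IsPartition P) (W : ℝ → ℝ → ℝ)
    (hWstep : ∀ S ∈ P, ∀ T ∈ P, ∀ x ∈ S, ∀ x' ∈ S, ∀ y ∈ T, ∀ y' ∈ T, W x y = W x' y')
    (pt : Set ℝ → ℝ) (hpt : ∀ A ∈ P, pt A ∈ A)
    (𝒮 𝒯 : Finset (Set ℝ)) (h𝒮 : 𝒮 ⊆ P) (h𝒯 : 𝒯 ⊆ P) :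
    ∫ x in ⋃₀ (𝒮 : Set (Set ℝ)), ∫ y in ⋃₀ (𝒯 : Set (Set ℝ)), W x y =
      ∑ A ∈ 𝒮, ∑ B ∈ 𝒯,
        W (pt A) (pt B) * (volume A).toReal * (volume B).toReal := by
  classical
  obtain ⟨hPm, hPu, hPd⟩ := hP
  have hsub : ∀ (𝒬 : Finset (Set ℝ)), 𝒬 ⊆ P → ⋃₀ (𝒬 : Set (Set ℝ)) ⊆ Set.Icc 0 1 := by
    intro 𝒬 h𝒬
    rw [← hPu]
    exact Set.sUnion_subset_sUnion (by exact_mod_cast h𝒬)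
  have hmeas : ∀ (𝒬 : Finset (Set ℝ)), 𝒬 ⊆ P → MeasurableSet (⋃₀ (𝒬 : Set (Set ℝ))) :=
    fun 𝒬 h𝒬 => (𝒬.finite_toSet).measurableSet_sUnion
      (fun A hA => (hPm A (h𝒬 hA)).1)
  have hvol : ∀ (𝒬 : Finset (Set ℝ)), 𝒬 ⊆ P → ∀ A ∈ P,
      volume (⋃₀ (𝒬 : Set (Set ℝ)) ∩ A) = if A ∈ 𝒬 then volume A else 0 := by
    intro 𝒬 h𝒬 A hA
    by_cases h : A ∈ 𝒬
    · simp only [h, if_true]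
      congr 1
      apply Set.inter_eq_right.mpr
      exact Set.subset_sUnion_of_mem (by exact_mod_cast h)
    · simp only [h, if_false]
      convert measure_empty (μ := volume)
      ext x
      simp only [Set.mem_inter_iff, Set.mem_sUnion, Finset.mem_coe, Set.mem_empty_iff_false,
        iff_false]
      rintro ⟨⟨C, hC, hxC⟩, hxA⟩
      exact (hPd C (h𝒬 hC) A hA (fun hCA => h (hCA ▸ hC))).le_bot ⟨hxC, hxA⟩
  rw [full_decomp P ⟨hPm, hPu, hPd⟩ W hWstep pt hpt _ _ (hsub 𝒮 h𝒮) (hmeas 𝒮 h𝒮)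
    (hsub 𝒯 h𝒯) (hmeas 𝒯 h𝒯)]
  rw [← Finset.sum_subset h𝒮 (by
    intro A hA hA𝒮
    refine Finset.sum_eq_zero fun B hB => ?_
    rw [hvol 𝒮 h𝒮 A hA]
    simp [hA𝒮])]
  refine Finset.sum_congr rfl fun A hA => ?_
  rw [← Finset.sum_subset h𝒯 (by
    intro B hB hB𝒯
    rw [hvol 𝒯 h𝒯 B hB]
    simp [hB𝒯])]
  refine Finset.sum_congr rfl fun B hB => ?_
  rw [hvol 𝒮 h𝒮 A (h𝒮 hA), hvol 𝒯 h𝒯 B (h𝒯 hB)]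
  simp [hA, hB]

theorem stmt10 (P : Finset (Set ℝ)) (hP : IsPartition P) (W : ℝ → ℝ → ℝ)
    (hWmeas : Measurable fun p : ℝ × ℝ => W p.1 p.2)
    (hWint : IntegrableOn (fun p : ℝ × ℝ => W p.1 p.2) (Set.Icc 0 1 ×ˢ Set.Icc 0 1))
    (hWstep : ∀ S ∈ P, ∀ T ∈ P, ∀ x ∈ S, ∀ x' ∈ S, ∀ y ∈ T, ∀ y' ∈ T,
      W x y = W x' y') :
    cutNorm W = sSup {r : ℝ | ∃ 𝒮 𝒯 : Finset (Set ℝ), 𝒮 ⊆ P ∧ 𝒯 ⊆ P ∧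
      r = |∫ x in ⋃₀ (𝒮 : Set (Set ℝ)), ∫ y in ⋃₀ (𝒯 : Set (Set ℝ)), W x y|} := by
  classical
  obtain ⟨hPm, hPu, hPd⟩ := hP
  set pt : Set ℝ → ℝ := fun A => if h : A.Nonempty then h.choose else 0 with hptdef
  have hpt : ∀ A ∈ P, pt A ∈ A := by
    intro A hA
    have hne : A.Nonempty := nonempty_of_measure_ne_zero (hPm A hA).2.ne'
    simp only [hptdef, hne, dif_pos]
    exact hne.choose_spec
  set R := {r : ℝ | ∃ 𝒮 𝒯 : Finset (Set ℝ), 𝒮 ⊆ P ∧ 𝒯 ⊆ P ∧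
      r = |∫ x in ⋃₀ (𝒮 : Set (Set ℝ)), ∫ y in ⋃₀ (𝒯 : Set (Set ℝ)), W x y|} with hRdef
  set L := {r : ℝ | ∃ S T : Set ℝ, S ⊆ Set.Icc 0 1 ∧ T ⊆ Set.Icc 0 1 ∧
    MeasurableSet S ∧ MeasurableSet T ∧
    r = |∫ x in S, ∫ y in T, W x y|} with hLdef
  have hRne : R.Nonempty := ⟨_, ∅, ∅, Finset.empty_subset _, Finset.empty_subset _, rfl⟩
  have hLne : L.Nonempty := ⟨_, ∅, ∅, Set.empty_subset _, Set.empty_subset _,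
    MeasurableSet.empty, MeasurableSet.empty, rfl⟩
  have hRfin : R.Finite := by
    refine Set.Finite.subset (Finset.finite_toSet ((P.powerset ×ˢ P.powerset).image
      fun p : Finset (Set ℝ) × Finset (Set ℝ) =>
        |∫ x in ⋃₀ (p.1 : Set (Set ℝ)), ∫ y in ⋃₀ (p.2 : Set (Set ℝ)), W x y|)) ?_
    rintro r ⟨𝒮, 𝒯, h𝒮, h𝒯, rfl⟩
    simp only [Finset.coe_image, Set.mem_image, Finset.mem_coe, Finset.mem_product,
      Finset.mem_powerset]
    exact ⟨(𝒮, 𝒯), ⟨h𝒮, h𝒯⟩, rfl⟩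
  have hRbdd : BddAbove R := hRfin.bddAbove
  have hAfin : ∀ A ∈ P, volume A ≠ ⊤ := by
    intro A hA
    have : A ⊆ Set.Icc (0:ℝ) 1 := hPu ▸ Set.subset_sUnion_of_mem (by exact_mod_cast hA)
    exact (lt_of_le_of_lt (measure_mono this) measure_Icc_lt_top).ne
  -- key bound
  have key : ∀ r ∈ L, r ≤ sSup R := by
    rintro r ⟨S, T, hS, hT, hSm, hTm, rfl⟩
    rw [full_decomp P ⟨hPm, hPu, hPd⟩ W hWstep pt hpt S T hS hSm hT hTm]
    set a : Set ℝ → ℝ := fun A => (volume (S ∩ A)).toReal with hadef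
    set b : Set ℝ → ℝ := fun B => (volume (T ∩ B)).toReal with hbdef
    set c : Set ℝ → ℝ := fun A => (volume A).toReal with hcdef
    have hac : ∀ A ∈ P, 0 ≤ a A ∧ a A ≤ c A := fun A hA =>
      ⟨ENNReal.toReal_nonneg,
       ENNReal.toReal_mono (hAfin A hA) (measure_mono Set.inter_subset_right)⟩
    have hbc : ∀ B ∈ P, 0 ≤ b B ∧ b B ≤ c B := fun B hB =>
      ⟨ENNReal.toReal_nonneg,
       ENNReal.toReal_mono (hAfin B hB) (measure_mono Set.inter_subset_right)⟩
    have step1 : (∑ A ∈ P, ∑ B ∈ P, W (pt A) (pt B) * a A * b B)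
        = ∑ A ∈ P, (∑ B ∈ P, W (pt A) (pt B) * b B) * a A := by
      refine Finset.sum_congr rfl fun A hA => ?_
      rw [Finset.sum_mul]
      exact Finset.sum_congr rfl fun B hB => by ring
    rw [step1]
    obtain ⟨𝒮, h𝒮, hle1⟩ := lin_opt P (fun A => ∑ B ∈ P, W (pt A) (pt B) * b B) c a
      (fun A hA => (hac A hA).1) (fun A hA => (hac A hA).2)
    refine hle1.trans ?_
    have step2 : (∑ A ∈ 𝒮, (∑ B ∈ P, W (pt A) (pt B) * b B) * c A)
        = ∑ B ∈ P, (∑ A ∈ 𝒮, W (pt A) (pt B) * c A) * b B := by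
      have : ∀ A ∈ 𝒮, (∑ B ∈ P, W (pt A) (pt B) * b B) * c A
          = ∑ B ∈ P, W (pt A) (pt B) * b B * c A :=
        fun A hA => by rw [Finset.sum_mul]
      rw [Finset.sum_congr rfl this, Finset.sum_comm]
      refine Finset.sum_congr rfl fun B hB => ?_
      rw [Finset.sum_mul]
      refine Finset.sum_congr rfl fun A hA => by ring
    rw [step2]
    obtain ⟨𝒯, h𝒯, hle2⟩ := lin_opt P (fun B => ∑ A ∈ 𝒮, W (pt A) (pt B) * c A) c b
      (fun B hB => (hbc B hB).1) (fun B hB => (hbc B hB).2)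
    refine hle2.trans ?_
    have step3 : (∑ B ∈ 𝒯, (∑ A ∈ 𝒮, W (pt A) (pt B) * c A) * c B)
        = ∑ A ∈ 𝒮, ∑ B ∈ 𝒯, W (pt A) (pt B) * (volume A).toReal * (volume B).toReal := by
      have : ∀ B ∈ 𝒯, (∑ A ∈ 𝒮, W (pt A) (pt B) * c A) * c B
          = ∑ A ∈ 𝒮, W (pt A) (pt B) * c A * c B :=
        fun B hB => by rw [Finset.sum_mul]
      rw [Finset.sum_congr rfl this, Finset.sum_comm]
    rw [step3, ← union_eval P ⟨hPm, hPu, hPd⟩ W hWstep pt hpt 𝒮 𝒯 h𝒮 h𝒯]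
    exact le_csSup hRbdd ⟨𝒮, 𝒯, h𝒮, h𝒯, rfl⟩
  have hLbdd : BddAbove L := ⟨sSup R, key⟩
  rw [cutNorm]
  refine le_antisymm (csSup_le hLne key) (csSup_le_csSup hLbdd hRne ?_)
  rintro r ⟨𝒮, 𝒯, h𝒮, h𝒯, rfl⟩
  have hsub : ∀ (𝒬 : Finset (Set ℝ)), 𝒬 ⊆ P → ⋃₀ (𝒬 : Set (Set ℝ)) ⊆ Set.Icc 0 1 := by
    intro 𝒬 h𝒬
    rw [← hPu]
    exact Set.sUnion_subset_sUnion (by exact_mod_cast h𝒬)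
  have hmeas : ∀ (𝒬 : Finset (Set ℝ)), 𝒬 ⊆ P → MeasurableSet (⋃₀ (𝒬 : Set (Set ℝ))) :=
    fun 𝒬 h𝒬 => (𝒬.finite_toSet).measurableSet_sUnion (fun A hA => (hPm A (h𝒬 hA)).1)
  exact ⟨_, _, hsub 𝒮 h𝒮, hsub 𝒯 h𝒯, hmeas 𝒮 h𝒮, hmeas 𝒯 h𝒯, rfl⟩
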